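/- arXiv:1107.5146 — 5 statements merged into one kernel-verified Lean document; each statement's English description precedes it below -/
import Mathlib

section
/- If ς > 0 is a critical point of the canonical dual function P^d(ς) = −1/(8ς) − (1/2)ς² − 2ς, and x = 1/(2ς), then x is a critical point of P(x) = (1/2)((1/2)x² − 2)² − (1/2)x and P(x) = P^d(ς). -/
theorem canonical_dual_critical_point (ς x : ℝ) (hς : 0 < ς)
    (hcrit : deriv (fun s : ℝ => -1 / (8 * s) - (1 / 2) * s ^ 2 - 2 * s) ς = 0)
    (hx : x = 1 / (2 * ς)) :
    deriv (fun x' : ℝ => (1 / 2) * ((1 / 2) * x' ^ 2 - 2) ^ 2 - (1 / 2) * x') x = 0 ∧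
    (1 / 2) * ((1 / 2) * x ^ 2 - 2) ^ 2 - (1 / 2) * x =
      -1 / (8 * ς) - (1 / 2) * ς ^ 2 - 2 * ς := by
  have hne : ς ≠ 0 := hς.ne'
  -- derivative of the dual function
  have h8 : HasDerivAt (fun s : ℝ => 8 * s) 8 ς := by
    simpa using (hasDerivAt_id ς).const_mul (8 : ℝ)
  have h1 : HasDerivAt (fun s : ℝ => -1 / (8 * s)) (1 / (8 * ς ^ 2)) ς := by
    have := (hasDerivAt_const ς (-1 : ℝ)).div h8 (by positivity)
    refine this.congr_deriv ?_
    field_simp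
    ring
  have h2 : HasDerivAt (fun s : ℝ => (1 / 2 : ℝ) * s ^ 2) ς ς := by
    have := (hasDerivAt_pow 2 ς).const_mul (1 / 2 : ℝ)
    refine this.congr_deriv ?_
    ring
  have h3 : HasDerivAt (fun s : ℝ => (2 : ℝ) * s) 2 ς := by
    simpa using (hasDerivAt_id ς).const_mul (2 : ℝ)
  have hd : HasDerivAt (fun s : ℝ => -1 / (8 * s) - (1 / 2) * s ^ 2 - 2 * s)
      (1 / (8 * ς ^ 2) - ς - 2) ς := (h1.sub h2).sub h3
  have heq : 1 / (8 * ς ^ 2) - ς - 2 = 0 := by rw [← hd.deriv]; exact hcrit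
  have hrel : 8 * ς ^ 3 + 16 * ς ^ 2 = 1 := by
    field_simp at heq
    nlinarith [heq]
  -- derivative of P at x
  have hxne : x ≠ 0 := by
    rw [hx]; positivity
  have hP : HasDerivAt (fun x' : ℝ => (1 / 2) * ((1 / 2) * x' ^ 2 - 2) ^ 2 - (1 / 2) * x')
      (x * ((1 / 2) * x ^ 2 - 2) - 1 / 2) x := by
    have hin : HasDerivAt (fun x' : ℝ => (1 / 2 : ℝ) * x' ^ 2 - 2) x x := by
      have := ((hasDerivAt_pow 2 x).const_mul (1 / 2 : ℝ)).sub_const 2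
      refine this.congr_deriv ?_
      ring
    have := ((hin.pow 2).const_mul (1 / 2 : ℝ)).sub
      ((hasDerivAt_id x).const_mul (1 / 2 : ℝ))
    refine this.congr_deriv ?_
    ring
  have hxval : x = 1 / (2 * ς) := hx
  constructor
  · rw [hP.deriv, hxval]
    field_simp
    nlinarith [hrel]
  · rw [hxval]
    field_simp
    linear_combination (64 * ς ^ 3 + 128 * ς ^ 2 - 8) * hrel
end

section
/- For the Gao-Strang complementary function Ξ(x, ς) = ((1/2)x² − 2)ς − (1/2)ς² − (1/2)x, a pair (x̄, ς̄) with ς̄ ≠ 0 is a critical point of Ξ if and only if ς̄ = (1/2)x̄² − 2 and x̄·ς̄ = 1/2; at any such point, P(x̄) = Ξ(x̄, ς̄) = P^d(ς̄), where P(x) = (1/2)((1/2)x² − 2)² − (1/2)x and P^d(ς) = −1/(8ς) − (1/2)ς² − 2ς. -/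
theorem gao_strang_critical_point (x ς : ℝ) (hς : ς ≠ 0) :
    ((deriv (fun x' : ℝ => ((1 / 2) * x' ^ 2 - 2) * ς - (1 / 2) * ς ^ 2 - (1 / 2) * x') x = 0 ∧
      deriv (fun s : ℝ => ((1 / 2) * x ^ 2 - 2) * s - (1 / 2) * s ^ 2 - (1 / 2) * x) ς = 0) ↔
      (ς = (1 / 2) * x ^ 2 - 2 ∧ x * ς = 1 / 2)) ∧
    ((ς = (1 / 2) * x ^ 2 - 2 ∧ x * ς = 1 / 2) →
      (1 / 2) * ((1 / 2) * x ^ 2 - 2) ^ 2 - (1 / 2) * x =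
        ((1 / 2) * x ^ 2 - 2) * ς - (1 / 2) * ς ^ 2 - (1 / 2) * x ∧
      ((1 / 2) * x ^ 2 - 2) * ς - (1 / 2) * ς ^ 2 - (1 / 2) * x =
        -1 / (8 * ς) - (1 / 2) * ς ^ 2 - 2 * ς) := by
  have h1 : deriv (fun x' : ℝ => ((1 / 2) * x' ^ 2 - 2) * ς - (1 / 2) * ς ^ 2 - (1 / 2) * x') x
      = x * ς - 1 / 2 := by
    have h : HasDerivAt (fun x' : ℝ => ((1 / 2) * x' ^ 2 - 2) * ς - (1 / 2) * ς ^ 2 - (1 / 2) * x')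
        (x * ς - 1 / 2) x := by
      have hp : HasDerivAt (fun x' : ℝ => x' ^ 2) (2 * x) x := by
        simpa using hasDerivAt_pow 2 x
      have := (((hp.const_mul (1/2 : ℝ)).sub_const 2).mul_const ς).sub_const ((1/2) * ς ^ 2)
      have := this.sub ((hasDerivAt_id x).const_mul (1/2 : ℝ))
      exact this.congr_deriv (by ring)
    exact h.deriv
  have h2 : deriv (fun s : ℝ => ((1 / 2) * x ^ 2 - 2) * s - (1 / 2) * s ^ 2 - (1 / 2) * x) ς
      = ((1 / 2) * x ^ 2 - 2) - ς := by
    have h : HasDerivAt (fun s : ℝ => ((1 / 2) * x ^ 2 - 2) * s - (1 / 2) * s ^ 2 - (1 / 2) * x)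
        (((1 / 2) * x ^ 2 - 2) - ς) ς := by
      have hp : HasDerivAt (fun s : ℝ => s ^ 2) (2 * ς) ς := by
        simpa using hasDerivAt_pow 2 ς
      have := (((hasDerivAt_id ς).const_mul ((1/2) * x ^ 2 - 2 : ℝ)).sub
        (hp.const_mul (1/2 : ℝ))).sub_const ((1/2) * x)
      exact this.congr_deriv (by ring)
    exact h.deriv
  constructor
  · rw [h1, h2]
    constructor
    · rintro ⟨ha, hb⟩
      constructor <;> linarith
    · rintro ⟨ha, hb⟩
      constructor <;> linarith
  · rintro ⟨ha, hb⟩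
    constructor
    · rw [← ha]; ring
    · have hx : x = 1 / (2 * ς) := by
        field_simp
        linarith
      rw [← ha]
      field_simp
      nlinarith [sq_nonneg ς, hb, ha]
end

section
/- Canonical duality for the double-well problem: min_{x ∈ ℝ} P(x) = max_{ς > 0} P^d(ς), where P(x) = (1/2)((1/2)x² − 2)² − (1/2)x and P^d(ς) = −1/(8ς) − (1/2)ς² − 2ς; moreover both extrema are attained. -/
theorem canonical_duality_double_well :
    ∃ xbar sbar : ℝ, 0 < sbar ∧
      (∀ x : ℝ, (1 / 2) * ((1 / 2) * xbar ^ 2 - 2) ^ 2 - (1 / 2) * xbar ≤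
        (1 / 2) * ((1 / 2) * x ^ 2 - 2) ^ 2 - (1 / 2) * x) ∧
      (∀ ς : ℝ, 0 < ς →
        -1 / (8 * ς) - (1 / 2) * ς ^ 2 - 2 * ς ≤
          -1 / (8 * sbar) - (1 / 2) * sbar ^ 2 - 2 * sbar) ∧
      (1 / 2) * ((1 / 2) * xbar ^ 2 - 2) ^ 2 - (1 / 2) * xbar =
        -1 / (8 * sbar) - (1 / 2) * sbar ^ 2 - 2 * sbar := by
  obtain ⟨s, hs, hroot⟩ : ∃ s : ℝ, 0 < s ∧ 8 * s ^ 3 + 16 * s ^ 2 = 1 := by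
    have hcont : ContinuousOn (fun s : ℝ => 8 * s ^ 3 + 16 * s ^ 2)
        (Set.Icc (0.2 : ℝ) 0.25) := by fun_prop
    have h := intermediate_value_Icc (by norm_num : (0.2 : ℝ) ≤ 0.25) hcont
    have h1 : (1 : ℝ) ∈ Set.Icc ((fun s : ℝ => 8 * s ^ 3 + 16 * s ^ 2) 0.2)
        ((fun s : ℝ => 8 * s ^ 3 + 16 * s ^ 2) 0.25) := by
      constructor <;> norm_num
    obtain ⟨s, hmem, hval⟩ := h h1
    exact ⟨s, lt_of_lt_of_le (by norm_num) hmem.1, hval⟩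
  have hsne : s ≠ 0 := ne_of_gt hs
  obtain ⟨x, hxdef⟩ : ∃ x : ℝ, x = 1 / (2 * s) := ⟨_, rfl⟩
  have hxs : 2 * s * x = 1 := by rw [hxdef]; field_simp
  have h4 : (4 * s ^ 2) * x ^ 2 = (4 * s ^ 2) * (2 * s + 4) := by
    linear_combination (2 * s * x + 1) * hxs - hroot
  have hx2 : x ^ 2 = 2 * s + 4 :=
    mul_left_cancel₀ (by positivity) h4
  have hx3 : x ^ 3 - 4 * x = 1 := by
    linear_combination x * hx2 + hxs
  refine ⟨x, s, hs, ?_, ?_, ?_⟩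
  · intro t
    have key : 8 * ((1 / 2) * ((1 / 2) * t ^ 2 - 2) ^ 2 - (1 / 2) * t) -
        8 * ((1 / 2) * ((1 / 2) * x ^ 2 - 2) ^ 2 - (1 / 2) * x) =
        (t - x) ^ 2 * ((t + x) ^ 2 + 2 * x ^ 2 - 8) := by
      linear_combination (4 * t - 4 * x) * hx3
    have hpos : 0 ≤ (t - x) ^ 2 * ((t + x) ^ 2 + 2 * x ^ 2 - 8) := by
      apply mul_nonneg (sq_nonneg _)
      nlinarith [sq_nonneg (t + x), hx2, hs]
    linarith [key, hpos]
  · intro ς hσ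
    have hσne : ς ≠ 0 := ne_of_gt hσ
    have hk : ((-1 / (8 * s) - (1 / 2) * s ^ 2 - 2 * s) -
        (-1 / (8 * ς) - (1 / 2) * ς ^ 2 - 2 * ς)) * (8 * s * ς) =
        4 * s * (ς - s) ^ 2 * (ς + 2 * s + 4) := by
      field_simp
      linear_combination (2 * ς - 2 * s) * hroot
    have hC : 0 ≤ 4 * s * (ς - s) ^ 2 * (ς + 2 * s + 4) := by positivity
    nlinarith [hk, hC, mul_pos (mul_pos (by norm_num : (0:ℝ) < 8) hs) hσ]
  · have hmid : (1 / 2) * x ^ 2 - 2 = s := by linarith [hx2]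
    rw [hmid, hxdef]
    field_simp
    linear_combination (4) * hroot
end

section
/- Global optimality criterion (canonical duality, general quartic case in ℝⁿ): let P(x) = Σ_{i=1}^m (α_i/2)((1/2)xᵀA_i x + b_iᵀx + c_i)² + (1/2)xᵀQx − xᵀf with symmetric A_i, Q, and α_i > 0. Suppose ς̄ ∈ ℝᵐ satisfies: (i) G(ς̄) = Q + Σ ς̄_i A_i is positive definite, (ii) with x̄ = G(ς̄)⁻¹(f − Σ ς̄_i b_i), one has ς̄_i = α_i((1/2)x̄ᵀA_i x̄ + b_iᵀx̄ + c_i) for all i. Then x̄ is a global minimizer of P on ℝⁿ. -/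
open Matrix

private lemma sum_smul_mulVec' {n m : ℕ} (ς : Fin m → ℝ) (A : Fin m → Matrix (Fin n) (Fin n) ℝ)
    (v : Fin n → ℝ) : (∑ i, ς i • A i) *ᵥ v = ∑ i, ς i • (A i *ᵥ v) := by
  ext j
  simp [Matrix.mulVec, dotProduct, Finset.sum_apply, Matrix.sum_apply, Matrix.smul_apply,
    Finset.sum_mul, smul_eq_mul, mul_assoc]
  rw [Finset.sum_comm]
  exact Finset.sum_congr rfl fun i _ => (Finset.mul_sum _ _ _).symm

private lemma dot_sum' {n m : ℕ} (u : Fin n → ℝ) (w : Fin m → Fin n → ℝ) :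
    u ⬝ᵥ (∑ i, w i) = ∑ i, u ⬝ᵥ w i := by
  simp [dotProduct, Finset.sum_apply, Finset.mul_sum]
  rw [Finset.sum_comm]

theorem canonical_duality_global_optimality
    (n m : ℕ) (hn : 0 < n) (hm : 0 < m)
    (A : Fin m → Matrix (Fin n) (Fin n) ℝ) (Q : Matrix (Fin n) (Fin n) ℝ)
    (b : Fin m → Fin n → ℝ) (f : Fin n → ℝ) (c : Fin m → ℝ) (α : Fin m → ℝ)
    (hA : ∀ i, (A i).IsSymm) (hQ : Q.IsSymm) (hα : ∀ i, 0 < α i)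
    (ςbar : Fin m → ℝ)
    (hG : (Q + ∑ i, ςbar i • A i).PosDef)
    (xbar : Fin n → ℝ)
    (hxbar : xbar = (Q + ∑ i, ςbar i • A i)⁻¹ *ᵥ (f - ∑ i, ςbar i • b i))
    (hstat : ∀ i, ςbar i = α i * ((1 / 2) * (xbar ⬝ᵥ A i *ᵥ xbar) + b i ⬝ᵥ xbar + c i)) :
    ∀ x : Fin n → ℝ,
      (∑ i, (α i / 2) * ((1 / 2) * (xbar ⬝ᵥ A i *ᵥ xbar) + b i ⬝ᵥ xbar + c i) ^ 2)
        + (1 / 2) * (xbar ⬝ᵥ Q *ᵥ xbar) - xbar ⬝ᵥ f ≤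
      (∑ i, (α i / 2) * ((1 / 2) * (x ⬝ᵥ A i *ᵥ x) + b i ⬝ᵥ x + c i) ^ 2)
        + (1 / 2) * (x ⬝ᵥ Q *ᵥ x) - x ⬝ᵥ f := by
  intro x
  set G : Matrix (Fin n) (Fin n) ℝ := Q + ∑ i, ςbar i • A i with hGdef
  set F : Fin n → ℝ := f - ∑ i, ςbar i • b i with hFdef
  -- G is symmetric
  have hGsymm : Gᵀ = G := by
    rw [hGdef, Matrix.transpose_add, Matrix.transpose_sum, hQ.eq]
    congr 1
    refine Finset.sum_congr rfl fun i _ => ?_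
    rw [Matrix.transpose_smul, (hA i).eq]
  have hsym : ∀ u v : Fin n → ℝ, u ⬝ᵥ G *ᵥ v = v ⬝ᵥ G *ᵥ u := by
    intro u v
    rw [Matrix.dotProduct_mulVec, ← Matrix.mulVec_transpose, hGsymm, dotProduct_comm]
  -- G xbar = F
  have hGx : G *ᵥ xbar = F := by
    rw [hxbar, Matrix.mulVec_mulVec, Matrix.mul_nonsing_inv _ hG.det_pos.ne'.isUnit,
      Matrix.one_mulVec]
  -- quadratic expansion
  have hquad : ∀ u v : Fin n → ℝ,
      u ⬝ᵥ G *ᵥ v = u ⬝ᵥ Q *ᵥ v + ∑ i, ςbar i * (u ⬝ᵥ A i *ᵥ v) := by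
    intro u v
    rw [hGdef, Matrix.add_mulVec, dotProduct_add, sum_smul_mulVec', dot_sum']
    simp [dotProduct_smul, smul_eq_mul]
  have hF : ∀ u : Fin n → ℝ, u ⬝ᵥ F = u ⬝ᵥ f - ∑ i, ςbar i * (b i ⬝ᵥ u) := by
    intro u
    rw [hFdef, dotProduct_sub, dot_sum']
    simp [dotProduct_smul, smul_eq_mul, dotProduct_comm]
  -- the lagrangian
  set L : (Fin n → ℝ) → ℝ := fun y =>
    (1 / 2) * (y ⬝ᵥ G *ᵥ y) - y ⬝ᵥ F + (∑ i, ςbar i * c i) - ∑ i, ςbar i ^ 2 / (2 * α i)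
    with hLdef
  have hPL : ∀ y : Fin n → ℝ,
      L y = (∑ i, (ςbar i * ((1 / 2) * (y ⬝ᵥ A i *ᵥ y) + b i ⬝ᵥ y + c i)
              - ςbar i ^ 2 / (2 * α i)))
            + (1 / 2) * (y ⬝ᵥ Q *ᵥ y) - y ⬝ᵥ f := by
    intro y
    rw [hLdef]
    simp only
    rw [hquad y y, hF y, Finset.sum_sub_distrib]
    have e1 : ∀ i ∈ Finset.univ, ςbar i * ((1 / 2) * (y ⬝ᵥ A i *ᵥ y) + b i ⬝ᵥ y + c i)
        = ςbar i * (1 / 2) * (y ⬝ᵥ A i *ᵥ y) + ςbar i * (b i ⬝ᵥ y) + ςbar i * c i :=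
      fun i _ => by ring
    rw [Finset.sum_congr rfl e1]
    simp only [Finset.sum_add_distrib]
    rw [show ∑ i, ςbar i * (1 / 2) * (y ⬝ᵥ A i *ᵥ y) = (1 / 2) * ∑ i, ςbar i * (y ⬝ᵥ A i *ᵥ y)
      from by rw [Finset.mul_sum]; exact Finset.sum_congr rfl fun i _ => by ring]
    ring
  -- L ≤ P pointwise
  have hLP : ∀ y : Fin n → ℝ,
      L y ≤ (∑ i, (α i / 2) * ((1 / 2) * (y ⬝ᵥ A i *ᵥ y) + b i ⬝ᵥ y + c i) ^ 2)
        + (1 / 2) * (y ⬝ᵥ Q *ᵥ y) - y ⬝ᵥ f := by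
    intro y
    rw [hPL y]
    have : ∀ i ∈ Finset.univ,
        (ςbar i * ((1 / 2) * (y ⬝ᵥ A i *ᵥ y) + b i ⬝ᵥ y + c i) - ςbar i ^ 2 / (2 * α i))
        ≤ (α i / 2) * ((1 / 2) * (y ⬝ᵥ A i *ᵥ y) + b i ⬝ᵥ y + c i) ^ 2 := by
      intro i _
      have hai := hα i
      set g := (1 / 2) * (y ⬝ᵥ A i *ᵥ y) + b i ⬝ᵥ y + c i
      have hne : α i ≠ 0 := ne_of_gt hai
      have key : 0 ≤ (α i * g - ςbar i) ^ 2 / (2 * α i) := by positivity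
      have heq : (α i / 2) * g ^ 2 - (ςbar i * g - ςbar i ^ 2 / (2 * α i))
          = (α i * g - ςbar i) ^ 2 / (2 * α i) := by
        field_simp
        ring
      linarith
    have := Finset.sum_le_sum this
    linarith
  -- equality at xbar
  have hLeq : L xbar = (∑ i, (α i / 2) * ((1 / 2) * (xbar ⬝ᵥ A i *ᵥ xbar) + b i ⬝ᵥ xbar + c i) ^ 2)
        + (1 / 2) * (xbar ⬝ᵥ Q *ᵥ xbar) - xbar ⬝ᵥ f := by
    rw [hPL xbar]
    have : ∀ i ∈ Finset.univ,
        (ςbar i * ((1 / 2) * (xbar ⬝ᵥ A i *ᵥ xbar) + b i ⬝ᵥ xbar + c i)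
          - ςbar i ^ 2 / (2 * α i))
        = (α i / 2) * ((1 / 2) * (xbar ⬝ᵥ A i *ᵥ xbar) + b i ⬝ᵥ xbar + c i) ^ 2 := by
      intro i _
      have hai := hα i
      have hne : α i ≠ 0 := ne_of_gt hai
      rw [hstat i]
      field_simp
      ring
    rw [Finset.sum_congr rfl this]
  -- L xbar ≤ L x via positive semidefiniteness
  have hpsd : 0 ≤ (x - xbar) ⬝ᵥ G *ᵥ (x - xbar) := by
    have := hG.posSemidef.dotProduct_mulVec_nonneg (x - xbar)
    simpa using this
  have hexp : (x - xbar) ⬝ᵥ G *ᵥ (x - xbar)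
      = x ⬝ᵥ G *ᵥ x - 2 * (x ⬝ᵥ G *ᵥ xbar) + xbar ⬝ᵥ G *ᵥ xbar := by
    rw [Matrix.mulVec_sub, dotProduct_sub, sub_dotProduct, sub_dotProduct,
      hsym xbar x]
    ring
  have hLL : L xbar ≤ L x := by
    rw [hLdef]
    simp only
    have h1 : x ⬝ᵥ F = x ⬝ᵥ G *ᵥ xbar := by rw [hGx]
    have h2 : xbar ⬝ᵥ F = xbar ⬝ᵥ G *ᵥ xbar := by rw [hGx]
    rw [h1, h2]
    nlinarith [hpsd, hexp]
  calc (∑ i, (α i / 2) * ((1 / 2) * (xbar ⬝ᵥ A i *ᵥ xbar) + b i ⬝ᵥ xbar + c i) ^ 2)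
        + (1 / 2) * (xbar ⬝ᵥ Q *ᵥ xbar) - xbar ⬝ᵥ f = L xbar := hLeq.symm
    _ ≤ L x := hLL
    _ ≤ _ := hLP x
end

section
/- Complementarity identity (Gao-Strang): with P, Ξ, P^d as in the general quartic canonical dual framework, if ς̄ is a critical point of P^d with G(ς̄) invertible and x̄ = G(ς̄)⁻¹F(ς̄), then P(x̄) = Ξ(x̄, ς̄) = P^d(ς̄). -/
open Matrix

attribute [local instance] Matrix.linftyOpNormedRing Matrix.linftyOpNormedAlgebra

private noncomputable def entryCLM' (n : ℕ) (j k : Fin n) :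
    Matrix (Fin n) (Fin n) ℝ →L[ℝ] ℝ :=
  LinearMap.toContinuousLinearMap
    { toFun := fun M => M j k, map_add' := fun _ _ => rfl, map_smul' := fun _ _ => rfl }

private lemma dot_sum_smul_mulVec (n m : ℕ) (A : Fin m → Matrix (Fin n) (Fin n) ℝ)
    (x : Fin n → ℝ) (ς : Fin m → ℝ) :
    x ⬝ᵥ (∑ i, ς i • A i) *ᵥ x = ∑ i, ς i * (x ⬝ᵥ A i *ᵥ x) := by
  simp only [dotProduct, mulVec, Matrix.sum_apply, Pi.smul_apply, Matrix.smul_apply,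
    smul_eq_mul, Finset.mul_sum, Finset.sum_mul]
  rw [Finset.sum_congr rfl fun j _ => Finset.sum_comm, Finset.sum_comm]
  exact Finset.sum_congr rfl fun i _ => Finset.sum_congr rfl fun j _ =>
    Finset.sum_congr rfl fun k _ => by ring

private lemma dot_sum_smul (n m : ℕ) (b : Fin m → Fin n → ℝ) (x : Fin n → ℝ) (ς : Fin m → ℝ) :
    x ⬝ᵥ (∑ i, ς i • b i) = ∑ i, ς i * (b i ⬝ᵥ x) := by
  simp only [dotProduct, Finset.sum_apply, Pi.smul_apply, smul_eq_mul, Finset.mul_sum]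
  rw [Finset.sum_comm]
  exact Finset.sum_congr rfl fun i _ => Finset.sum_congr rfl fun j _ => by ring

theorem gao_strang_complementarity
    (n m : ℕ) (hn : 0 < n) (hm : 0 < m)
    (A : Fin m → Matrix (Fin n) (Fin n) ℝ) (Q : Matrix (Fin n) (Fin n) ℝ)
    (b : Fin m → Fin n → ℝ) (f : Fin n → ℝ) (c : Fin m → ℝ) (α : Fin m → ℝ)
    (hA : ∀ i, (A i).IsSymm) (hQ : Q.IsSymm) (hα : ∀ i, 0 < α i)
    -- primal, complementary and dual functions
    (P : (Fin n → ℝ) → ℝ)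
    (hP : P = fun x => (∑ i, (α i / 2) * ((1 / 2) * (x ⬝ᵥ A i *ᵥ x) + b i ⬝ᵥ x + c i) ^ 2)
        + (1 / 2) * (x ⬝ᵥ Q *ᵥ x) - x ⬝ᵥ f)
    (Ξ : (Fin n → ℝ) → (Fin m → ℝ) → ℝ)
    (hΞ : Ξ = fun x ς => (∑ i, (((1 / 2) * (x ⬝ᵥ A i *ᵥ x) + b i ⬝ᵥ x + c i) * ς i
        - ς i ^ 2 / (2 * α i))) + (1 / 2) * (x ⬝ᵥ Q *ᵥ x) - x ⬝ᵥ f)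
    (F : (Fin m → ℝ) → Fin n → ℝ) (hF : F = fun ς => f - ∑ i, ς i • b i)
    (G : (Fin m → ℝ) → Matrix (Fin n) (Fin n) ℝ) (hG : G = fun ς => Q + ∑ i, ς i • A i)
    (Pd : (Fin m → ℝ) → ℝ)
    (hPd : Pd = fun ς => (∑ i, (c i * ς i - ς i ^ 2 / (2 * α i)))
        - (1 / 2) * (F ς ⬝ᵥ (G ς)⁻¹ *ᵥ F ς))
    (ςbar : Fin m → ℝ) (hinv : IsUnit (G ςbar).det)
    (hcrit : fderiv ℝ Pd ςbar = 0)
    (xbar : Fin n → ℝ) (hxbar : xbar = (G ςbar)⁻¹ *ᵥ F ςbar) :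
    P xbar = Ξ xbar ςbar ∧ Ξ xbar ςbar = Pd ςbar := by
  have hGx : G ςbar *ᵥ xbar = F ςbar := by
    rw [hxbar, Matrix.mulVec_mulVec, Matrix.mul_nonsing_inv _ hinv, Matrix.one_mulVec]
  have hU : IsUnit (G ςbar) := (Matrix.isUnit_iff_isUnit_det _).mpr hinv
  have hRinv : Ring.inverse (G ςbar) = (G ςbar)⁻¹ := (Matrix.nonsing_inv_eq_ringInverse _).symm
  have hGsymm : (G ςbar)ᵀ = G ςbar := by
    rw [hG]
    simp only [Matrix.transpose_add, Matrix.transpose_sum, Matrix.transpose_smul]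
    rw [hQ.eq]
    congr 1
    exact Finset.sum_congr rfl fun k _ => by rw [(hA k).eq]
  have hMsymm : ((G ςbar)⁻¹)ᵀ = (G ςbar)⁻¹ := by
    rw [Matrix.transpose_nonsing_inv, hGsymm]
  have hkey : ∀ v, F ςbar ⬝ᵥ (G ςbar)⁻¹ *ᵥ v = xbar ⬝ᵥ v := by
    intro v
    rw [Matrix.dotProduct_mulVec, ← hMsymm, Matrix.vecMul_transpose, ← hxbar]
  -- stationarity (analytic part)
  have hstat : ∀ i, ςbar i =
      α i * ((1 / 2) * (xbar ⬝ᵥ A i *ᵥ xbar) + b i ⬝ᵥ xbar + c i) := by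
    intro i
    classical
    set e : Fin m → ℝ := Pi.single i 1 with he
    set ℓ : ℝ → (Fin m → ℝ) := fun t => ςbar + t • e with hldef
    have hl0 : ℓ 0 = ςbar := by simp [hldef]
    have hFl : ∀ t, F (ℓ t) = F ςbar - t • b i := by
      intro t
      simp only [hF, hldef, he, Pi.add_apply, Pi.smul_apply, smul_eq_mul, add_smul,
        Finset.sum_add_distrib, Pi.single_apply, ite_mul, mul_ite, mul_one, mul_zero,
        ite_smul, zero_smul, Finset.sum_ite_eq', Finset.mem_univ, if_true,
        sub_add_eq_sub_sub]
    have hGl : ∀ t, G (ℓ t) = G ςbar + t • A i := by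
      intro t
      simp only [hG, hldef, he, Pi.add_apply, Pi.smul_apply, smul_eq_mul, add_smul,
        Finset.sum_add_distrib, Pi.single_apply, ite_mul, mul_ite, mul_one, mul_zero,
        ite_smul, zero_smul, Finset.sum_ite_eq', Finset.mem_univ, if_true, add_assoc]
    -- coordinates of F along the line
    have hu : ∀ j, HasDerivAt (fun t => F (ℓ t) j) (-(b i j)) 0 := by
      intro j
      have hrw : (fun t => F (ℓ t) j) = fun t => F ςbar j - t * b i j := by
        funext t; rw [hFl t]; simp
      rw [hrw]
      simpa using (((hasDerivAt_id (0:ℝ)).mul_const (b i j)).const_sub (F ςbar j))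
    -- inverse matrix along the line
    have hNmat : HasDerivAt (fun t => Ring.inverse (G (ℓ t)))
        (-((G ςbar)⁻¹ * A i * (G ςbar)⁻¹)) 0 := by
      have hrw : (fun t => Ring.inverse (G (ℓ t)))
          = fun t => Ring.inverse (G ςbar + t • A i) := by
        funext t; rw [hGl t]
      rw [hrw]
      have hGt : HasDerivAt (fun t : ℝ => G ςbar + t • A i) (A i) 0 := by
        have h := ((hasDerivAt_id' (0:ℝ)).smul_const (A i)).const_add (G ςbar)
        simp only [one_smul] at h
        exact h
      have hf' : HasFDerivAt Ring.inverse
          (-ContinuousLinearMap.mulLeftRight ℝ (Matrix (Fin n) (Fin n) ℝ)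
            ↑hU.unit⁻¹ ↑hU.unit⁻¹)
          ((fun t : ℝ => G ςbar + t • A i) 0) := by
        have hf := hasFDerivAt_ringInverse (𝕜 := ℝ) hU.unit
        rw [hU.unit_spec] at hf
        simpa using hf
      have h2 := hf'.comp_hasDerivAt 0 hGt
      simp [Function.comp_def, Matrix.coe_units_inv, hU.unit_spec] at h2
      exact h2
    have hNentry : ∀ j k, HasDerivAt (fun t => Ring.inverse (G (ℓ t)) j k)
        ((-((G ςbar)⁻¹ * A i * (G ςbar)⁻¹)) j k) 0 := by
      intro j k
      have h2 := (entryCLM' n j k).hasFDerivAt.comp_hasDerivAt 0 hNmat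
      exact h2
    -- derivative of the quadratic-form part
    have hpsi : HasDerivAt
        (fun t => ∑ j, F (ℓ t) j * ∑ k, Ring.inverse (G (ℓ t)) j k * F (ℓ t) k)
        (∑ j, ((-(b i j)) * ∑ k, Ring.inverse (G ςbar) j k * F ςbar k
          + F ςbar j * ∑ k, ((-((G ςbar)⁻¹ * A i * (G ςbar)⁻¹)) j k * F ςbar k
            + Ring.inverse (G ςbar) j k * (-(b i k))))) 0 := by
      have h2 := HasDerivAt.fun_sum (fun j (_ : j ∈ Finset.univ) =>
        (hu j).fun_mul (HasDerivAt.fun_sum (fun k (_ : k ∈ Finset.univ) =>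
          (hNentry j k).fun_mul (hu k))))
      simpa [hl0] using h2
    -- derivative of the first sum
    have hcoord : ∀ k, HasDerivAt (fun t => ℓ t k) (e k) 0 := by
      intro k
      have hrw : (fun t => ℓ t k) = fun t => ςbar k + t * e k := by
        funext t; simp [hldef]
      rw [hrw]
      simpa using ((hasDerivAt_id (0:ℝ)).mul_const (e k)).const_add (ςbar k)
    have hS : HasDerivAt (fun t => ∑ k, (c k * ℓ t k - ℓ t k ^ 2 / (2 * α k)))
        (c i - ςbar i / α i) 0 := by
      have h2 := HasDerivAt.fun_sum (fun k (_ : k ∈ Finset.univ) =>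
        (((hcoord k).const_mul (c k)).fun_sub (((hcoord k).fun_pow 2).div_const (2 * α k))))
      have h3 : ∑ k, (c k * e k - (2:ℕ) * ℓ 0 k ^ (2-1) * e k / (2 * α k))
          = c i - ςbar i / α i := by
        rw [Finset.sum_sub_distrib]
        simp only [hl0, he, Pi.single_apply, mul_ite, mul_one, mul_zero, ite_mul, zero_mul,
          show (2:ℕ) - 1 = 1 from rfl, pow_one, Nat.cast_ofNat, ite_div, zero_div,
          Finset.sum_ite_eq', Finset.mem_univ, if_true]
        have hαi := (hα i).ne'
        congr 1
        field_simp
      rw [← h3]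
      exact h2
    -- the full derivative along the line
    have hg : HasDerivAt (fun t => Pd (ℓ t))
        ((c i - ςbar i / α i) - (1/2) * (∑ j, ((-(b i j)) * ∑ k, Ring.inverse (G ςbar) j k * F ςbar k
          + F ςbar j * ∑ k, ((-((G ςbar)⁻¹ * A i * (G ςbar)⁻¹)) j k * F ςbar k
            + Ring.inverse (G ςbar) j k * (-(b i k)))))) 0 := by
      have hrw : (fun t => Pd (ℓ t)) = fun t =>
          (∑ k, (c k * ℓ t k - ℓ t k ^ 2 / (2 * α k)))
          - (1/2) * ∑ j, F (ℓ t) j * ∑ k, Ring.inverse (G (ℓ t)) j k * F (ℓ t) k := by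
        funext t
        rw [hPd]
        simp only [dotProduct, mulVec, Matrix.nonsing_inv_eq_ringInverse]
      rw [hrw]
      exact hS.sub (hpsi.const_mul (1/2))
    -- full differentiability of Pd at ςbar
    have hproj : ∀ k, DifferentiableAt ℝ (fun ς : Fin m → ℝ => ς k) ςbar := by
      intro k
      exact (ContinuousLinearMap.proj (R := ℝ) (φ := fun _ : Fin m => ℝ) k).differentiableAt
    have hFdiff : ∀ j, DifferentiableAt ℝ (fun ς => F ς j) ςbar := by
      intro j
      have hrw : (fun ς => F ς j) = fun ς : Fin m → ℝ => f j - ∑ k, ς k * b k j := by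
        funext ς; simp [hF]
      rw [hrw]
      exact (differentiableAt_const _).sub
        (DifferentiableAt.fun_sum fun k _ => (hproj k).mul_const (b k j))
    have hGdiff : DifferentiableAt ℝ G ςbar := by
      rw [hG]
      exact (differentiableAt_const Q).add
        (DifferentiableAt.fun_sum fun k _ => (hproj k).smul_const (A k))
    have hNdiff : DifferentiableAt ℝ (fun ς => Ring.inverse (G ς)) ςbar :=
      (differentiableAt_inverse hU).comp ςbar hGdiff
    have hNediff : ∀ j k, DifferentiableAt ℝ (fun ς => Ring.inverse (G ς) j k) ςbar := by
      intro j k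
      have h2 := ((entryCLM' n j k).differentiableAt).comp ςbar hNdiff
      exact h2
    have hPdiff : DifferentiableAt ℝ Pd ςbar := by
      have hrw : Pd = fun ς => (∑ k, (c k * ς k - ς k ^ 2 / (2 * α k)))
          - (1/2) * ∑ j, F ς j * ∑ k, Ring.inverse (G ς) j k * F ς k := by
        funext ς
        rw [hPd]
        simp only [dotProduct, mulVec, Matrix.nonsing_inv_eq_ringInverse]
      rw [hrw]
      have hterm : ∀ k, DifferentiableAt ℝ
          (fun ς : Fin m → ℝ => c k * ς k - ς k ^ 2 / (2 * α k)) ςbar := by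
        intro k
        have h1 : DifferentiableAt ℝ (fun ς : Fin m → ℝ => c k * ς k) ςbar :=
          (hproj k).const_mul (c k)
        have h2 : DifferentiableAt ℝ (fun ς : Fin m → ℝ => ς k ^ 2 / (2 * α k)) ςbar := by
          simp only [div_eq_mul_inv]
          exact ((hproj k).pow 2).mul_const ((2 * α k)⁻¹)
        exact h1.sub h2
      exact (DifferentiableAt.fun_sum fun k _ => hterm k).sub
        ((DifferentiableAt.fun_sum fun j _ => (hFdiff j).mul
          (DifferentiableAt.fun_sum fun k _ => (hNediff j k).mul (hFdiff k))).const_mul (1/2))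
    -- derivative along line is zero by criticality
    have hl : HasDerivAt ℓ e 0 := by
      rw [hldef]
      simpa using ((hasDerivAt_id (0:ℝ)).smul_const e).const_add ςbar
    have hzero : HasDerivAt (fun t => Pd (ℓ t)) 0 0 := by
      have hf' : HasFDerivAt Pd (fderiv ℝ Pd ςbar) (ℓ 0) := by
        rw [hl0]; exact hPdiff.hasFDerivAt
      have h2 := hf'.comp_hasDerivAt 0 hl
      rw [hcrit] at h2
      simpa [Function.comp_def] using h2
    have heq := hg.unique hzero
    -- identify the derivative of the quadratic part
    have hDpsi : (∑ j, ((-(b i j)) * ∑ k, Ring.inverse (G ςbar) j k * F ςbar k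
          + F ςbar j * ∑ k, ((-((G ςbar)⁻¹ * A i * (G ςbar)⁻¹)) j k * F ςbar k
            + Ring.inverse (G ςbar) j k * (-(b i k)))))
        = -(b i ⬝ᵥ xbar) + (-(xbar ⬝ᵥ A i *ᵥ xbar) + -(b i ⬝ᵥ xbar)) := by
      rw [hRinv]
      have step1 : (∑ j, ((-(b i j)) * ∑ k, (G ςbar)⁻¹ j k * F ςbar k
            + F ςbar j * ∑ k, ((-((G ςbar)⁻¹ * A i * (G ςbar)⁻¹)) j k * F ςbar k
              + (G ςbar)⁻¹ j k * (-(b i k)))))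
          = (-(b i)) ⬝ᵥ ((G ςbar)⁻¹ *ᵥ F ςbar)
            + (F ςbar ⬝ᵥ ((-((G ςbar)⁻¹ * A i * (G ςbar)⁻¹)) *ᵥ F ςbar)
              + F ςbar ⬝ᵥ ((G ςbar)⁻¹ *ᵥ (-(b i)))) := by
        simp only [dotProduct, mulVec, Pi.neg_apply, Finset.sum_add_distrib, mul_add,
          Finset.mul_sum, neg_mul, mul_neg]
      rw [step1]
      congr 1
      · rw [neg_dotProduct, ← hxbar]
      congr 1
      · rw [Matrix.neg_mulVec, dotProduct_neg, neg_inj]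
        rw [← Matrix.mulVec_mulVec, ← hxbar, ← Matrix.mulVec_mulVec, hkey]
      · rw [Matrix.mulVec_neg, dotProduct_neg, neg_inj, hkey,
          dotProduct_comm]
    rw [hDpsi] at heq
    have hαi := (hα i).ne'
    field_simp at heq ⊢
    linarith [heq]
  constructor
  · simp only [hP, hΞ]
    simp only [sub_left_inj, add_left_inj]
    refine Finset.sum_congr rfl fun i _ => ?_
    rw [hstat i]
    have hαi := (hα i).ne'
    field_simp
    ring
  · simp only [hΞ, hPd]
    have E1 : xbar ⬝ᵥ (G ςbar *ᵥ xbar)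
        = xbar ⬝ᵥ Q *ᵥ xbar + ∑ i, ςbar i * (xbar ⬝ᵥ A i *ᵥ xbar) := by
      rw [hG]
      simp only [Matrix.add_mulVec, dotProduct_add]
      rw [dot_sum_smul_mulVec]
    have E2 : xbar ⬝ᵥ F ςbar = xbar ⬝ᵥ f - ∑ i, ςbar i * (b i ⬝ᵥ xbar) := by
      rw [hF]
      simp only [dotProduct_sub]
      rw [dot_sum_smul]
    have E4 : xbar ⬝ᵥ (G ςbar *ᵥ xbar) = xbar ⬝ᵥ F ςbar := by rw [hGx]
    have E3 : F ςbar ⬝ᵥ (G ςbar)⁻¹ *ᵥ F ςbar = xbar ⬝ᵥ F ςbar := by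
      rw [← hxbar, dotProduct_comm]
    rw [E3]
    have split : ∑ i, (((1 / 2) * (xbar ⬝ᵥ A i *ᵥ xbar) + b i ⬝ᵥ xbar + c i) * ςbar i
          - ςbar i ^ 2 / (2 * α i))
        = (∑ i, (c i * ςbar i - ςbar i ^ 2 / (2 * α i)))
          + (1/2) * (∑ i, ςbar i * (xbar ⬝ᵥ A i *ᵥ xbar))
          + ∑ i, ςbar i * (b i ⬝ᵥ xbar) := by
      rw [Finset.mul_sum, ← Finset.sum_add_distrib, ← Finset.sum_add_distrib]
      exact Finset.sum_congr rfl fun i _ => by ring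
    rw [split]
    linear_combination (-(1/2)) * E1 + (1/2) * E4 + E2
end
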